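/- Let n ≥ 1, 0 ≤ k ≤ n, and r ≥ 1. The pullback map Φ^* restricts to a linear isomorphism from P_r^-Λ^k(T^n) onto P_{2r+k}^-Λ^k_e(S^n), the space of even forms in P_{2r+k}^-Λ^k(S^n). -/

import Mathlib

open scoped BigOperators
open MeasureTheory

noncomputable section

/-- Vectors in `ℝ^m`. -/
abbrev Vec (m : ℕ) := Fin m → ℝ

/-- Differential `k`-forms on `ℝ^m`, given pointwise as alternating `k`-tensors. -/
abbrev Form (m k : ℕ) := Vec m → (Vec m [⋀^Fin k]→ₗ[ℝ] ℝ)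

/-- A multivariate polynomial has (total) degree at most `r : ℤ`. -/
def degLE {m : ℕ} (r : ℤ) (p : MvPolynomial (Fin m) ℝ) : Prop :=
  ∀ d ∈ p.support, ((d.sum fun _ e => e : ℕ) : ℤ) ≤ r

/-- `P_rΛ^k(ℝ^m)`: differential `k`-forms with polynomial coefficients of degree at most `r`. -/
def PL (m k : ℕ) (r : ℤ) : Set (Form m k) :=
  {α | ∀ v : Fin k → Vec m, ∃ p : MvPolynomial (Fin m) ℝ,
      degLE r p ∧ ∀ x, α x v = MvPolynomial.eval x p}

/-- Interior product with the radial vector field `X = Σ xᵢ ∂/∂xᵢ`. -/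
def iU {m k : ℕ} (β : Form m (k + 1)) : Form m k := fun x => (β x).curryLeft x

/-- `P_r⁻Λ^k(ℝ^m) := i_X P_{r-1}Λ^{k+1}(ℝ^m)`. -/
def PLm (m k : ℕ) (r : ℤ) : Set (Form m k) := iU '' PL m (k + 1) (r - 1)

/-- The reflection negating the `i`-th coordinate, as a map. -/
def reflFun (m : ℕ) (i : Fin m) (u : Vec m) : Vec m := fun j => if j = i then -u j else u j

/-- The reflection negating the `i`-th coordinate, as a linear map. -/
def reflLin (m : ℕ) (i : Fin m) : Vec m →ₗ[ℝ] Vec m :=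
  LinearMap.pi fun j => if j = i then -LinearMap.proj j else LinearMap.proj j

/-- Pullback of an ambient form along the reflection `R_i`. -/
def reflPull (m k : ℕ) (i : Fin m) (α : Form m k) : Form m k :=
  fun x => (α (reflFun m i x)).compLinearMap (reflLin m i)

/-- A form on `ℝ^m` is even if it is invariant under all coordinate reflections. -/
def IsEven (m k : ℕ) (α : Form m k) : Prop := ∀ i, reflPull m k i α = α

/-- A form on `ℝ^m` is odd if every coordinate reflection negates it. -/
def IsOdd (m k : ℕ) (α : Form m k) : Prop := ∀ i, reflPull m k i α = -α

/-- The map `Φ(u) = (u₁², …, u_m²)`. -/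
def Phi (m : ℕ) (u : Vec m) : Vec m := fun i => u i ^ 2

/-- The differential of `Φ` at `u`. -/
def dPhi (m : ℕ) (u : Vec m) : Vec m →ₗ[ℝ] Vec m :=
  LinearMap.pi fun i => (2 * u i) • LinearMap.proj i

/-- Pullback of ambient forms along `Φ`. -/
def phiPull (m k : ℕ) (α : Form m k) : Form m k :=
  fun u => (α (Phi m u)).compLinearMap (dPhi m u)

/-- The standard simplex `T^{m-1} ⊂ ℝ^m`. -/
def simplexSet (m : ℕ) : Set (Vec m) := {x | (∀ i, 0 ≤ x i) ∧ ∑ i, x i = 1}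

/-- The unit sphere `S^{m-1} ⊂ ℝ^m`. -/
def sphereSet (m : ℕ) : Set (Vec m) := {u | ∑ i, u i ^ 2 = 1}

/-- The linear functional `v ↦ ⟨u, v⟩`. -/
def dotLin (m : ℕ) (u : Vec m) : Vec m →ₗ[ℝ] ℝ := ∑ i, u i • LinearMap.proj i

/-- Orthogonal projection onto the tangent space of the sphere at `u`. -/
def projSph (m : ℕ) (u : Vec m) : Vec m →ₗ[ℝ] Vec m :=
  LinearMap.id - (dotLin m u).smulRight u

/-- The linear functional `v ↦ Σ vᵢ`. -/
def sumLin (m : ℕ) : Vec m →ₗ[ℝ] ℝ := ∑ i, LinearMap.proj i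

/-- Orthogonal projection onto the tangent hyperplane `{Σ vᵢ = 0}` of the simplex. -/
def projSim (m : ℕ) : Vec m →ₗ[ℝ] Vec m :=
  LinearMap.id - ((m : ℝ)⁻¹ • sumLin m).smulRight (fun _ => 1)

/-- Differential `k`-forms on a subset `M ⊆ ℝ^m`, encoded at each point by the canonical
alternating tensor on `ℝ^m` that vanishes in the directions normal to `M` (i.e. the
pullback along the inclusion, extended by the tangent projection). -/
abbrev FormOn (m : ℕ) (M : Set (Vec m)) (k : ℕ) := M → (Vec m [⋀^Fin k]→ₗ[ℝ] ℝ)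

/-- Restriction (pullback along the inclusion) of an ambient form to the simplex. -/
def resSim (m k : ℕ) (α : Form m k) : FormOn m (simplexSet m) k :=
  fun x => (α x.1).compLinearMap (projSim m)

/-- Restriction (pullback along the inclusion) of an ambient form to the sphere. -/
def resSph (m k : ℕ) (α : Form m k) : FormOn m (sphereSet m) k :=
  fun u => (α u.1).compLinearMap (projSph m u.1)

/-- `P_rΛ^k(T^{m-1})`. -/
def PLsim (m k : ℕ) (r : ℤ) : Set (FormOn m (simplexSet m) k) := resSim m k '' PL m k r

/-- `P_rΛ^k(S^{m-1})`. -/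
def PLsph (m k : ℕ) (r : ℤ) : Set (FormOn m (sphereSet m) k) := resSph m k '' PL m k r

/-- `P_r⁻Λ^k(T^{m-1})`. -/
def PLmsim (m k : ℕ) (r : ℤ) : Set (FormOn m (simplexSet m) k) := resSim m k '' PLm m k r

/-- `P_r⁻Λ^k(S^{m-1})`. -/
def PLmsph (m k : ℕ) (r : ℤ) : Set (FormOn m (sphereSet m) k) := resSph m k '' PLm m k r

lemma phi_mem_simplex {m : ℕ} {u : Vec m} (hu : u ∈ sphereSet m) :
    Phi m u ∈ simplexSet m :=
  ⟨fun _ => sq_nonneg _, hu⟩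

/-- Pullback `Φ^* : Λ^k(T^{m-1}) → Λ^k(S^{m-1})` along `Φ : S^{m-1} → T^{m-1}`. -/
def phiPullTS (m k : ℕ) (a : FormOn m (simplexSet m) k) : FormOn m (sphereSet m) k :=
  fun u => (a ⟨Phi m u.1, phi_mem_simplex u.2⟩).compLinearMap
    ((dPhi m u.1).comp (projSph m u.1))

lemma refl_mem_sphere {m : ℕ} {i : Fin m} {u : Vec m} (hu : u ∈ sphereSet m) :
    reflFun m i u ∈ sphereSet m := by
  have : ∀ j, (reflFun m i u j) ^ 2 = u j ^ 2 := by
    intro j; simp only [reflFun]; split <;> ring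
  simpa only [sphereSet, Set.mem_setOf_eq, this] using hu

/-- Pullback of a form on the sphere along the reflection `R_i`. -/
def reflPullSph (m k : ℕ) (i : Fin m) (α : FormOn m (sphereSet m) k) :
    FormOn m (sphereSet m) k :=
  fun u => (α ⟨reflFun m i u.1, refl_mem_sphere u.2⟩).compLinearMap (reflLin m i)

/-- A form on the sphere is even if it is invariant under all coordinate reflections. -/
def IsEvenSph (m k : ℕ) (α : FormOn m (sphereSet m) k) : Prop :=
  ∀ i, reflPullSph m k i α = α

/-- A form on the sphere is odd if every coordinate reflection negates it. -/
def IsOddSph (m k : ℕ) (α : FormOn m (sphereSet m) k) : Prop :=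
  ∀ i, reflPullSph m k i α = -α

/-- The bubble function `u_N = u₁ ⋯ u_m`. -/
def bubble (m : ℕ) (u : Vec m) : ℝ := ∏ i, u i

/-- Multiplication of a form on the sphere by the bubble function. -/
def bubbleSmul (m k : ℕ) (α : FormOn m (sphereSet m) k) : FormOn m (sphereSet m) k :=
  fun u => bubble m u.1 • α u

/-- Multiplication of an ambient form by the bubble function. -/
def bubbleSmulAmb (m k : ℕ) (α : Form m k) : Form m k :=
  fun u => bubble m u • α u

/-- The standard volume form on `ℝ^m`. -/
def volForm (m : ℕ) : (Vec m) [⋀^Fin m]→ₗ[ℝ] ℝ := (Pi.basisFun ℝ (Fin m)).det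

/-- Iterated interior product: insert the vectors `v 0, …, v (k-1)` into the
first `k` slots of an alternating `(k+j)`-tensor. -/
def contrMany {m : ℕ} : (k : ℕ) → (Fin k → Vec m) → {j : ℕ} →
    ((Vec m) [⋀^Fin (k + j)]→ₗ[ℝ] ℝ) → ((Vec m) [⋀^Fin j]→ₗ[ℝ] ℝ)
  | 0, _, j, α => α.domDomCongr (finCongr (Nat.zero_add j))
  | (k + 1), v, j, α =>
      contrMany k (fun i => v i.succ)
        ((α.domDomCongr (finCongr (by omega : (k + 1) + j = (k + j) + 1))).curryLeft (v 0))

/-- The Hodge star on alternating tensors on `ℝ^m` (standard metric and orientation):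
`(⋆α)(w₁,…,w_{m-k}) = (1/k!) Σ_g α(e_{g 0},…,e_{g(k-1)}) vol(e_{g 0},…,e_{g(k-1)},w₁,…,w_{m-k})`. -/
def starAlt (m k : ℕ) (α : (Vec m) [⋀^Fin k]→ₗ[ℝ] ℝ) : (Vec m) [⋀^Fin (m - k)]→ₗ[ℝ] ℝ :=
  if h : k ≤ m then
    (k.factorial : ℝ)⁻¹ •
      ∑ g : Fin k → Fin m,
        α (fun i => Pi.single (g i) 1) •
          contrMany k (fun i => Pi.single (g i) 1)
            ((volForm m).domDomCongr (finCongr (by omega : m = k + (m - k))))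
  else 0

/-- The Hodge star `⋆_{ℝ^m}` applied pointwise to ambient forms. -/
def starR (m k : ℕ) (α : Form m k) : Form m (m - k) := fun x => starAlt m k (α x)

/-- The wedge product of alternating tensors. -/
def wedgeAlt {m k l : ℕ} (α : (Vec m) [⋀^Fin k]→ₗ[ℝ] ℝ) (β : (Vec m) [⋀^Fin l]→ₗ[ℝ] ℝ) :
    (Vec m) [⋀^Fin (k + l)]→ₗ[ℝ] ℝ :=
  ((TensorProduct.lid ℝ ℝ).toLinearMap.compAlternatingMap (α.domCoprod β)).domDomCongr
    finSumFinEquiv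

/-- The conormal `ν = Σ uᵢ duᵢ` at `u`, as an alternating 1-tensor. -/
def nuForm (m : ℕ) (u : Vec m) : (Vec m) [⋀^Fin 1]→ₗ[ℝ] ℝ :=
  AlternatingMap.ofSubsingleton ℝ (Vec m) ℝ (0 : Fin 1) (dotLin m u)

/-- The extended Hodge star `⋆_{S^{m-1}} α := ⋆_{ℝ^m}(ν ∧ α)` on ambient forms. -/
def starSphAmb (m k : ℕ) (α : Form m k) : Form m (m - (1 + k)) :=
  fun x => starAlt m (1 + k) (wedgeAlt (nuForm m x) (α x))

/-- The Hodge star of a form on the sphere (w.r.t. the round metric and the orientation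
induced by the outward normal), computed as the restriction of `⋆_{ℝ^m}(ν ∧ ·)`. -/
def starSph (m k : ℕ) (α : FormOn m (sphereSet m) k) :
    FormOn m (sphereSet m) (m - (1 + k)) :=
  fun u => (starAlt m (1 + k) (wedgeAlt (nuForm m u.1) (α u))).compLinearMap (projSph m u.1)

/-- Re-indexing a form along an equality of form degrees. -/
def castForm {m k l : ℕ} (h : k = l) (α : Form m k) : Form m l :=
  fun x => (α x).domDomCongr (finCongr h)

/-- Re-indexing a form on a subset along an equality of form degrees. -/
def castFormOn {m : ℕ} {M : Set (Vec m)} {k l : ℕ} (h : k = l) (α : FormOn m M k) :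
    FormOn m M l :=
  fun x => (α x).domDomCongr (finCongr h)

/-- Trace on the boundary of the simplex vanishes: at every boundary point (a point of some
face `xᵢ = 0`), the form vanishes on vectors tangent to that face. -/
def vanishBdry (m k : ℕ) (a : FormOn m (simplexSet m) k) : Prop :=
  ∀ (x : simplexSet m) (i : Fin m), x.1 i = 0 →
    ∀ v : Fin k → Vec m, (∀ j, (∑ l, v j l) = 0 ∧ v j i = 0) → a x v = 0

/-- `P̊_rΛ^k(T^{m-1})`: forms in `P_rΛ^k(T^{m-1})` with vanishing trace on the boundary. -/
def PLosim (m k : ℕ) (r : ℤ) : Set (FormOn m (simplexSet m) k) :=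
  {a ∈ PLsim m k r | vanishBdry m k a}

/-- `P̊_r⁻Λ^k(T^{m-1})`. -/
def PLmosim (m k : ℕ) (r : ℤ) : Set (FormOn m (simplexSet m) k) :=
  {a ∈ PLmsim m k r | vanishBdry m k a}

/-- A form on the sphere vanishes (as an alternating tensor on the tangent space)
at every point of `S^{m-1} ∩ Γ`, where `Γ = ∪ᵢ {uᵢ = 0}`. -/
def zeroOnGammaSph (m k : ℕ) (α : FormOn m (sphereSet m) k) : Prop :=
  ∀ u : sphereSet m, (∃ i, u.1 i = 0) →
    ∀ v : Fin k → Vec m, (∀ j, ∑ l, u.1 l * v j l = 0) → α u v = 0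

/-- An ambient form vanishes (as an alternating tensor) at every point of `Γ`. -/
def zeroOnGammaAmb (m k : ℕ) (α : Form m k) : Prop :=
  ∀ u : Vec m, (∃ i, u i = 0) → α u = 0

/-- The wedge product of forms on a subset. -/
def wedgeOn {m : ℕ} {M : Set (Vec m)} {k l : ℕ} (a : FormOn m M k) (b : FormOn m M l) :
    FormOn m M (k + l) :=
  fun x => wedgeAlt (a x) (b x)

/-- The base region of the parametrization of the simplex. -/
def baseSimplex (n : ℕ) : Set (Fin n → ℝ) := {y | (∀ j, 0 ≤ y j) ∧ ∑ j, y j ≤ 1}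

/-- Parametrization `y ↦ (1 - Σy, y)` of `T^n` over the base region. -/
def simplexParam (n : ℕ) (y : Fin n → ℝ) : Vec (n + 1) := Fin.cons (1 - ∑ j, y j) y

lemma simplexParam_mem {n : ℕ} {y : Fin n → ℝ} (h : y ∈ baseSimplex n) :
    simplexParam n y ∈ simplexSet (n + 1) := by
  constructor
  · intro i
    refine Fin.cases ?_ ?_ i
    · simpa [simplexParam] using sub_nonneg.mpr h.2
    · intro j; simpa [simplexParam] using h.1 j
  · simp [simplexParam, Fin.sum_cons]

/-- The coordinate tangent vectors `∂x/∂y_j = e_{j+1} - e_0` of the parametrization,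
a positively oriented frame for the orientation of `T^n` induced from the outward-normal
orientation of `S^n` via `Φ`. -/
def simplexTangent (n : ℕ) (j : Fin n) : Vec (n + 1) :=
  Fin.cons (-1) (Pi.single j 1)

open Classical in
/-- The integral of an `n`-form over the oriented simplex `T^n`. -/
def integralSimplex (n : ℕ) (ω : FormOn (n + 1) (simplexSet (n + 1)) n) : ℝ :=
  ∫ y : Fin n → ℝ,
    if h : y ∈ baseSimplex n then ω ⟨simplexParam n y, simplexParam_mem h⟩ (simplexTangent n)
    else 0

/-- Forms on a subset that genuinely are pullbacks to the simplex: they vanish in the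
normal directions (canonical representatives). -/
def TangentialSim (m k : ℕ) (a : FormOn m (simplexSet m) k) : Prop :=
  ∀ x, (a x).compLinearMap (projSim m) = a x

/-- Continuity of a form on a subset. -/
def ContFormOn (m : ℕ) (M : Set (Vec m)) (k : ℕ) (a : FormOn m M k) : Prop :=
  ∀ v : Fin k → Vec m, Continuous fun x : M => a x v

/-- The Riemannian volume form of the round sphere `S^{m-1}` (outward-normal orientation),
i.e. the restriction of `⋆_{ℝ^m} ν`. -/
def volSph (m : ℕ) : FormOn m (sphereSet m) (m - 1) :=
  fun u => (starAlt m 1 (nuForm m u.1)).compLinearMap (projSph m u.1)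


set_option maxRecDepth 2000
/-! ### Auxiliary: basic apply lemmas -/

open MvPolynomial in
theorem aux_true : True := trivial

namespace AFW
open Finset

variable {m k K : ℕ}

theorem dPhi_apply (m : ℕ) (u v : Vec m) (i : Fin m) : dPhi m u v i = 2 * u i * v i := by
  simp [dPhi, LinearMap.pi_apply, smul_eq_mul, mul_assoc]

theorem reflLin_apply (m : ℕ) (i : Fin m) (v : Vec m) (j : Fin m) :
    reflLin m i v j = reflFun m i v j := by
  by_cases h : j = i <;> simp [reflLin, reflFun, LinearMap.pi_apply, h]

theorem dotLin_apply (m : ℕ) (u v : Vec m) : dotLin m u v = ∑ i, u i * v i := by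
  simp [dotLin, LinearMap.sum_apply, smul_eq_mul]

theorem sumLin_apply (m : ℕ) (v : Vec m) : sumLin m v = ∑ i, v i := by
  simp [sumLin, LinearMap.sum_apply]

theorem projSph_apply (m : ℕ) (u v : Vec m) (l : Fin m) :
    projSph m u v l = v l - (∑ i, u i * v i) * u l := by
  simp [projSph, dotLin_apply, LinearMap.smulRight_apply, smul_eq_mul]

theorem projSim_apply (m : ℕ) (v : Vec m) (l : Fin m) :
    projSim m v l = v l - (m : ℝ)⁻¹ * (∑ i, v i) := by
  simp [projSim, sumLin_apply, LinearMap.smulRight_apply, smul_eq_mul]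

theorem projSim_eq_self {m : ℕ} {w : Vec m} (hw : ∑ l, w l = 0) : projSim m w = w := by
  funext l
  rw [projSim_apply, hw]
  ring

theorem sum_projSim_zero {m : ℕ} (hm : m ≠ 0) (v : Vec m) :
    ∑ l, projSim m v l = 0 := by
  have hcard : ((m : ℝ)) ≠ 0 := Nat.cast_ne_zero.mpr hm
  simp only [projSim_apply]
  rw [Finset.sum_sub_distrib, Finset.sum_const, Finset.card_univ, Fintype.card_fin]
  field_simp
  rw [nsmul_eq_mul, mul_div_assoc', mul_div_cancel_left₀ _ hcard, sub_self]

theorem sum_dPhi_projSph {m : ℕ} {u : Vec m} (hu : u ∈ sphereSet m) (w : Vec m) :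
    ∑ l, dPhi m u (projSph m u w) l = 0 := by
  have hu' : ∑ i, u i ^ 2 = 1 := hu
  simp only [dPhi_apply, projSph_apply]
  set c := ∑ i, u i * w i with hc
  have : ∀ l, 2 * u l * (w l - c * u l) = 2 * (u l * w l) - 2 * c * u l ^ 2 := by
    intro l; ring
  rw [Finset.sum_congr rfl fun l _ => this l, Finset.sum_sub_distrib, ← Finset.mul_sum,
    ← Finset.mul_sum, hu']
  ring

/-- Expansion of an alternating map in the coordinate basis. -/
theorem alt_expand {m K : ℕ} (γ : (Vec m) [⋀^Fin K]→ₗ[ℝ] ℝ) (v : Fin K → Vec m) :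
    γ v = ∑ g : Fin K → Fin m, (∏ j, v j (g j)) • γ (fun j => Pi.single (g j) 1) := by
  have hv : v = fun j => ∑ i, v j i • (Pi.single i 1 : Vec m) := by
    funext j
    have : ∀ i, v j i • (Pi.single i 1 : Vec m) = Pi.single i (v j i) := by
      intro i; funext l
      by_cases h : l = i <;> simp [Pi.single_apply, h]
    rw [Finset.sum_congr rfl fun i _ => this i, Finset.univ_sum_single]
  conv_lhs => rw [hv]
  have h1 : γ (fun j => ∑ i, v j i • (Pi.single i 1 : Vec m))
      = ∑ g : Fin K → Fin m, γ (fun j => v j (g j) • (Pi.single (g j) 1 : Vec m)) := by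
    exact γ.toMultilinearMap.map_sum (fun j i => v j i • (Pi.single i 1 : Vec m))
  rw [h1]
  refine Finset.sum_congr rfl fun g _ => ?_
  exact γ.toMultilinearMap.map_smul_univ (fun j => v j (g j)) (fun j => Pi.single (g j) 1)

theorem sum_alt_apply {ι : Type*} (s : Finset ι) (f : ι → (Vec m) [⋀^Fin K]→ₗ[ℝ] ℝ)
    (v : Fin K → Vec m) : (∑ i ∈ s, f i) v = ∑ i ∈ s, f i v := by
  induction s using Finset.cons_induction with
  | empty => simp
  | cons a s ha ih => rw [Finset.sum_cons, Finset.sum_cons, AlternatingMap.add_apply, ih]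

end AFW
namespace AFW
open MvPolynomial

variable {m : ℕ}

theorem degSum_eq (d : Fin m →₀ ℕ) : (d.sum fun _ e => e) = ∑ i, d i :=
  Finsupp.sum_fintype _ _ (fun _ => rfl)

theorem degLE_iff {r : ℤ} {p : MvPolynomial (Fin m) ℝ} :
    degLE r p ↔ ∀ d ∈ p.support, ((∑ i, d i : ℕ) : ℤ) ≤ r := by
  unfold degLE
  constructor <;> intro h d hd <;> have h2 := h d hd
  · rwa [degSum_eq] at h2
  · rwa [degSum_eq]

theorem degLE_zero {r : ℤ} (_hr : True) : degLE r (0 : MvPolynomial (Fin m) ℝ) := by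
  intro d hd; simp at hd

theorem degLE_mono {r s : ℤ} {p : MvPolynomial (Fin m) ℝ} (h : r ≤ s) (hp : degLE r p) :
    degLE s p := fun d hd => le_trans (hp d hd) h

theorem degLE_add {r : ℤ} {p q : MvPolynomial (Fin m) ℝ} (hp : degLE r p) (hq : degLE r q) :
    degLE r (p + q) := by
  classical
  intro d hd
  rcases Finset.mem_union.mp (MvPolynomial.support_add hd) with h | h
  · exact hp d h
  · exact hq d h

theorem degLE_neg {r : ℤ} {p : MvPolynomial (Fin m) ℝ} (hp : degLE r p) : degLE r (-p) := by
  intro d hd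
  rw [MvPolynomial.support_neg] at hd
  exact hp d hd

theorem degLE_smul {r : ℤ} {p : MvPolynomial (Fin m) ℝ} (c : ℝ) (hp : degLE r p) :
    degLE r (c • p) := fun d hd => hp d (MvPolynomial.support_smul hd)

theorem degLE_sum {ι : Type*} {r : ℤ} (s : Finset ι) (f : ι → MvPolynomial (Fin m) ℝ)
    (h : ∀ i ∈ s, degLE r (f i)) : degLE r (∑ i ∈ s, f i) := by
  classical
  induction s using Finset.cons_induction with
  | empty => simpa using degLE_zero trivial
  | cons a s ha ih =>
    rw [Finset.sum_cons]
    exact degLE_add (h a (Finset.mem_cons_self a s))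
      (ih fun i hi => h i (Finset.mem_cons_of_mem hi))

theorem degLE_mul {r s : ℤ} {p q : MvPolynomial (Fin m) ℝ} (hp : degLE r p) (hq : degLE s q) :
    degLE (r + s) (p * q) := by
  classical
  rw [degLE_iff] at *
  intro d hd
  rcases Finset.mem_add.mp (MvPolynomial.support_mul p q hd) with ⟨a, ha, b, hb, rfl⟩
  have : ∀ i, (a + b) i = a i + b i := fun i => rfl
  calc ((∑ i, (a + b) i : ℕ) : ℤ) = ((∑ i, a i : ℕ) : ℤ) + ((∑ i, b i : ℕ) : ℤ) := by
        push_cast [this, Finset.sum_add_distrib]; ring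
    _ ≤ r + s := add_le_add (hp a ha) (hq b hb)

theorem degLE_monomial {r : ℤ} {d : Fin m →₀ ℕ} {c : ℝ} (h : ((∑ i, d i : ℕ) : ℤ) ≤ r) :
    degLE r (monomial d c) := by
  rw [degLE_iff]
  intro e he
  have := MvPolynomial.support_monomial_subset he
  rw [Finset.mem_singleton] at this
  subst this; exact h

theorem degLE_C {c : ℝ} : degLE (0 : ℤ) (C c : MvPolynomial (Fin m) ℝ) := by
  rw [show (C c : MvPolynomial (Fin m) ℝ) = monomial 0 c from rfl]
  refine degLE_monomial ?_
  have h0 : (∑ i, (0 : Fin m →₀ ℕ) i) = 0 := Finset.sum_eq_zero fun i _ => rfl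
  rw [h0]
  norm_num

theorem degLE_X {i : Fin m} : degLE (1 : ℤ) (X i : MvPolynomial (Fin m) ℝ) := by
  intro d hd
  have hs : (X i : MvPolynomial (Fin m) ℝ).support = {Finsupp.single i 1} :=
    MvPolynomial.support_X
  rw [hs, Finset.mem_singleton] at hd
  subst hd
  rw [Finsupp.sum_single_index rfl]
  norm_num

theorem degLE_prod {ι : Type*} (s : Finset ι) (f : ι → MvPolynomial (Fin m) ℝ) (r : ι → ℤ)
    (h : ∀ i ∈ s, degLE (r i) (f i)) : degLE (∑ i ∈ s, r i) (∏ i ∈ s, f i) := by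
  classical
  induction s using Finset.cons_induction with
  | empty => simp only [Finset.prod_empty, Finset.sum_empty]
             rw [show (1 : MvPolynomial (Fin m) ℝ) = C 1 by simp]
             exact degLE_C
  | cons a s ha ih =>
    rw [Finset.sum_cons, Finset.prod_cons]
    exact degLE_mul (h a (Finset.mem_cons_self a s))
      (ih fun i hi => h i (Finset.mem_cons_of_mem hi))

/-! ### squaring substitution -/

def sqP (p : MvPolynomial (Fin m) ℝ) : MvPolynomial (Fin m) ℝ :=
  ∑ d ∈ p.support, monomial (2 • d) (coeff d p)

theorem eval_sqP (u : Vec m) (p : MvPolynomial (Fin m) ℝ) :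
    eval u (sqP p) = eval (fun i => u i ^ 2) p := by
  rw [sqP, map_sum, eval_eq' (fun i => u i ^ 2) p]
  refine Finset.sum_congr rfl fun d _ => ?_
  rw [eval_monomial, Finsupp.prod_pow]
  congr 1
  refine Finset.prod_congr rfl fun i _ => ?_
  rw [Finsupp.smul_apply, ← pow_mul, smul_eq_mul]

theorem degLE_sqP {r : ℤ} {p : MvPolynomial (Fin m) ℝ} (hp : degLE r p) :
    degLE (2 * r) (sqP p) := by
  rw [degLE_iff] at hp
  refine degLE_sum _ _ fun d hd => degLE_monomial ?_
  have h1 : (∑ i, (2 • d) i) = 2 * ∑ i, d i := by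
    rw [Finset.mul_sum]; exact Finset.sum_congr rfl fun i _ => by
      rw [Finsupp.smul_apply, smul_eq_mul]
  rw [h1]
  have := hp d hd
  push_cast at this ⊢
  omega

/-! ### reflection substitution -/

def reflFunS (m : ℕ) (S : Finset (Fin m)) (u : Vec m) : Vec m :=
  fun j => if j ∈ S then -u j else u j

def refP (S : Finset (Fin m)) (p : MvPolynomial (Fin m) ℝ) : MvPolynomial (Fin m) ℝ :=
  ∑ d ∈ p.support, monomial d ((∏ i ∈ S, (-1 : ℝ) ^ (d i)) * coeff d p)

theorem eval_refP (S : Finset (Fin m)) (x : Vec m) (p : MvPolynomial (Fin m) ℝ) :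
    eval x (refP S p) = eval (reflFunS m S x) p := by
  rw [refP, map_sum, eval_eq' (reflFunS m S x) p]
  refine Finset.sum_congr rfl fun d _ => ?_
  rw [eval_monomial, Finsupp.prod_pow]
  have h1 : ∀ i, (reflFunS m S x i) ^ (d i)
      = (if i ∈ S then (-1 : ℝ) ^ (d i) else 1) * x i ^ (d i) := by
    intro i
    by_cases h : i ∈ S
    · simp only [reflFunS, if_pos h]
      rw [neg_pow]
    · simp only [reflFunS, if_neg h, one_mul]
  rw [Finset.prod_congr rfl fun i _ => h1 i, Finset.prod_mul_distrib]
  have h2 : (∏ i, if i ∈ S then (-1 : ℝ) ^ (d i) else 1) = ∏ i ∈ S, (-1 : ℝ) ^ (d i) := by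
    rw [Finset.prod_ite_mem, Finset.univ_inter]
  rw [h2]
  ring

theorem coeff_refP (S : Finset (Fin m)) (p : MvPolynomial (Fin m) ℝ) (e : Fin m →₀ ℕ) :
    coeff e (refP S p) = (∏ i ∈ S, (-1 : ℝ) ^ (e i)) * coeff e p := by
  classical
  rw [refP]
  rw [MvPolynomial.coeff_sum]
  by_cases he : e ∈ p.support
  · rw [Finset.sum_eq_single e]
    · rw [coeff_monomial, if_pos rfl]
    · intro d _ hd; rw [coeff_monomial, if_neg hd]
    · intro h; exact absurd he h
  · have : coeff e p = 0 := by_contra fun h => he (MvPolynomial.mem_support_iff.mpr h)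
    rw [this, mul_zero]
    refine Finset.sum_eq_zero fun d hd => ?_
    rw [coeff_monomial, if_neg]
    rintro rfl; exact he hd

theorem degLE_refP {r : ℤ} (S : Finset (Fin m)) {p : MvPolynomial (Fin m) ℝ} (hp : degLE r p) :
    degLE r (refP S p) := by
  intro d hd
  have : coeff d (refP S p) ≠ 0 := MvPolynomial.mem_support_iff.mp hd
  rw [coeff_refP] at this
  have : coeff d p ≠ 0 := fun h => this (by rw [h, mul_zero])
  exact hp d (MvPolynomial.mem_support_iff.mpr this)

/-! ### halving substitution -/

def halfExp (d : Fin m →₀ ℕ) : Fin m →₀ ℕ := d.mapRange (fun e => e / 2) (Nat.zero_div 2)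

def halfP (p : MvPolynomial (Fin m) ℝ) : MvPolynomial (Fin m) ℝ :=
  ∑ d ∈ p.support, monomial (halfExp d) (coeff d p)

theorem halfP_neg (p : MvPolynomial (Fin m) ℝ) : halfP (-p) = -halfP p := by
  rw [halfP, halfP, MvPolynomial.support_neg, ← Finset.sum_neg_distrib]
  refine Finset.sum_congr rfl fun d _ => ?_
  rw [MvPolynomial.coeff_neg, map_neg]

end AFW
namespace AFW
open MvPolynomial

variable {m k K : ℕ}

/-! ### set reflections -/

def reflLinS (m : ℕ) (S : Finset (Fin m)) : Vec m →ₗ[ℝ] Vec m :=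
  LinearMap.pi fun j => if j ∈ S then -LinearMap.proj j else LinearMap.proj j

theorem reflLinS_apply (S : Finset (Fin m)) (v : Vec m) (j : Fin m) :
    reflLinS m S v j = reflFunS m S v j := by
  by_cases h : j ∈ S <;> simp only [reflLinS, reflFunS, LinearMap.pi_apply, if_pos, if_neg, h,
    if_true, if_false, LinearMap.neg_apply, LinearMap.proj_apply]

theorem reflLinS_eq (S : Finset (Fin m)) (v : Vec m) :
    reflLinS m S v = reflFunS m S v := funext fun j => reflLinS_apply S v j

theorem reflFunS_singleton (i : Fin m) (u : Vec m) :
    reflFunS m {i} u = reflFun m i u := by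
  funext j
  by_cases h : j = i <;> simp [reflFunS, reflFun, h]

theorem reflFunS_reflFun (S : Finset (Fin m)) (i : Fin m) (u : Vec m) :
    reflFunS m S (reflFun m i u) = reflFunS m (symmDiff S {i}) u := by
  classical
  funext j
  by_cases hS : j ∈ S <;> by_cases hi : j = i <;>
    simp [reflFunS, reflFun, Finset.mem_symmDiff, hS, hi]

theorem reflFun_reflFunS_insert {S : Finset (Fin m)} {i : Fin m} (hi : i ∉ S) (u : Vec m) :
    reflFun m i (reflFunS m S u) = reflFunS m (insert i S) u := by
  classical
  funext j
  by_cases hS : j ∈ S <;> by_cases hj : j = i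
  · exact absurd (hj ▸ hS) hi
  · simp [reflFun, reflFunS, hS, hj, Finset.mem_insert]
  · subst hj; simp [reflFun, reflFunS, hS, Finset.mem_insert]
  · simp [reflFun, reflFunS, hS, hj, Finset.mem_insert]

theorem reflFunS_empty (u : Vec m) : reflFunS m (∅ : Finset (Fin m)) u = u := by
  funext j; simp [reflFunS]

theorem reflFunS_sq (S : Finset (Fin m)) (u : Vec m) (i : Fin m) :
    reflFunS m S u i ^ 2 = u i ^ 2 := by
  by_cases h : i ∈ S
  · simp only [reflFunS, if_pos h]; ring
  · simp only [reflFunS, if_neg h]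

theorem reflFunS_mem_sphere {S : Finset (Fin m)} {u : Vec m} (hu : u ∈ sphereSet m) :
    reflFunS m S u ∈ sphereSet m := by
  have : ∀ i, reflFunS m S u i ^ 2 = u i ^ 2 := reflFunS_sq S u
  simpa only [sphereSet, Set.mem_setOf_eq, this] using hu

theorem reflFunS_dot (S : Finset (Fin m)) (u w : Vec m) :
    ∑ i, reflFunS m S u i * reflFunS m S w i = ∑ i, u i * w i := by
  refine Finset.sum_congr rfl fun i _ => ?_
  by_cases h : i ∈ S <;> simp [reflFunS, h]

theorem reflFunS_projSph (S : Finset (Fin m)) (u w : Vec m) :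
    projSph m (reflFunS m S u) (reflFunS m S w) = reflFunS m S (projSph m u w) := by
  funext l
  rw [projSph_apply, reflFunS_dot]
  by_cases h : l ∈ S <;> simp [reflFunS, h, projSph_apply] <;> ring

def reflPullS (m k : ℕ) (S : Finset (Fin m)) (α : Form m k) : Form m k :=
  fun x => (α (reflFunS m S x)).compLinearMap (reflLinS m S)

theorem reflPullS_apply (S : Finset (Fin m)) (α : Form m k) (x : Vec m) (v : Fin k → Vec m) :
    reflPullS m k S α x v = α (reflFunS m S x) (fun j => reflFunS m S (v j)) := by
  rw [reflPullS, AlternatingMap.compLinearMap_apply]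
  congr 1
  funext j
  exact reflLinS_eq S (v j)

/-! ### single reflections and Phi -/

theorem Phi_reflFun (i : Fin m) (u : Vec m) : Phi m (reflFun m i u) = Phi m u := by
  funext l
  by_cases h : l = i
  · simp only [Phi, reflFun, if_pos h]; ring
  · simp only [Phi, reflFun, if_neg h]

theorem dPhi_reflFun (i : Fin m) (u z : Vec m) :
    dPhi m (reflFun m i u) (reflFun m i z) = dPhi m u z := by
  funext l
  rw [dPhi_apply, dPhi_apply]
  by_cases h : l = i
  · simp only [reflFun, if_pos h]; ring
  · simp only [reflFun, if_neg h]

theorem reflFun_dot (i : Fin m) (u w : Vec m) :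
    ∑ l, reflFun m i u l * reflFun m i w l = ∑ l, u l * w l := by
  rw [← reflFunS_singleton i u, ← reflFunS_singleton i w]
  exact reflFunS_dot {i} u w

theorem reflFun_projSph (i : Fin m) (u w : Vec m) :
    projSph m (reflFun m i u) (reflFun m i w) = reflFun m i (projSph m u w) := by
  rw [← reflFunS_singleton i u, ← reflFunS_singleton i w, reflFunS_projSph,
    reflFunS_singleton]

/-! ### PL closure lemmas -/

theorem PL_zero {r : ℤ} : (0 : Form m k) ∈ PL m k r := by
  intro v
  exact ⟨0, degLE_zero trivial, fun x => by simp⟩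

theorem PL_add {r : ℤ} {α β : Form m k} (hα : α ∈ PL m k r) (hβ : β ∈ PL m k r) :
    α + β ∈ PL m k r := by
  intro v
  obtain ⟨p, hp, hpe⟩ := hα v
  obtain ⟨q, hq, hqe⟩ := hβ v
  refine ⟨p + q, degLE_add hp hq, fun x => ?_⟩
  rw [map_add, ← hpe x, ← hqe x]
  rfl

theorem PL_smul {r : ℤ} {α : Form m k} (c : ℝ) (hα : α ∈ PL m k r) : c • α ∈ PL m k r := by
  intro v
  obtain ⟨p, hp, hpe⟩ := hα v
  refine ⟨c • p, degLE_smul c hp, fun x => ?_⟩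
  have : eval x (c • p) = c * eval x p := by
    rw [MvPolynomial.smul_eq_C_mul, map_mul, eval_C]
  rw [this, ← hpe x]
  rfl

theorem PL_sum {r : ℤ} {ι : Type*} (s : Finset ι) (f : ι → Form m k)
    (h : ∀ i ∈ s, f i ∈ PL m k r) : (∑ i ∈ s, f i) ∈ PL m k r := by
  classical
  induction s using Finset.cons_induction with
  | empty => simpa using PL_zero
  | cons a s ha ih =>
    rw [Finset.sum_cons]
    exact PL_add (h a (Finset.mem_cons_self a s)) (ih fun i hi => h i (Finset.mem_cons_of_mem hi))

theorem PL_reflPullS {r : ℤ} {α : Form m k} (S : Finset (Fin m)) (hα : α ∈ PL m k r) :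
    reflPullS m k S α ∈ PL m k r := by
  intro v
  obtain ⟨p, hp, hpe⟩ := hα (fun j => reflFunS m S (v j))
  refine ⟨refP S p, degLE_refP S hp, fun x => ?_⟩
  rw [reflPullS_apply, eval_refP, ← hpe]

theorem PL_phiPull {s : ℤ} {β : Form m K} (hβ : β ∈ PL m K s) :
    phiPull m K β ∈ PL m K (2 * s + K) := by
  classical
  intro v
  refine ⟨∑ g : Fin K → Fin m,
      C ((2:ℝ)^K * ∏ j, v j (g j)) *
        ((∏ j, X (g j)) * sqP ((hβ (fun j => Pi.single (g j) 1)).choose)), ?_, ?_⟩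
  · refine degLE_sum _ _ fun g _ => ?_
    have h2 : degLE (K : ℤ) (∏ j, X (g j) : MvPolynomial (Fin m) ℝ) := by
      have h := degLE_prod (Finset.univ : Finset (Fin K)) (fun j => X (g j)) (fun _ => (1:ℤ))
        (fun j _ => degLE_X)
      have hsum : (∑ _j : Fin K, (1:ℤ)) = (K:ℤ) := by
        rw [Finset.sum_const, Finset.card_univ, Fintype.card_fin]
        simp
      rwa [hsum] at h
    have h3 : degLE (2*s) (sqP ((hβ (fun j => Pi.single (g j) 1)).choose)) :=
      degLE_sqP ((hβ (fun j => Pi.single (g j) 1)).choose_spec.1)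
    have h4 := degLE_mul (degLE_C (c := (2:ℝ)^K * ∏ j, v j (g j))) (degLE_mul h2 h3)
    exact degLE_mono (le_of_eq (by ring)) h4
  · intro u
    have h5 : phiPull m K β u v = β (Phi m u) (fun j => dPhi m u (v j)) := rfl
    rw [h5, alt_expand (β (Phi m u)) (fun j => dPhi m u (v j)), map_sum]
    refine Finset.sum_congr rfl fun g _ => ?_
    have hspec := (hβ (fun j => Pi.single (g j) 1)).choose_spec.2
    rw [hspec (Phi m u)]
    have hsq : eval u (sqP ((hβ (fun j => Pi.single (g j) 1)).choose))
        = eval (Phi m u) ((hβ (fun j => Pi.single (g j) 1)).choose) := by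
      rw [eval_sqP]
      rfl
    simp only [map_mul, eval_C, map_prod, eval_X]
    rw [hsq]
    have hprod : (∏ j, dPhi m u (v j) (g j))
        = (2:ℝ)^K * (∏ j, v j (g j)) * ∏ j, u (g j) := by
      rw [Finset.prod_congr rfl fun j (_ : j ∈ Finset.univ) => dPhi_apply m u (v j) (g j)]
      rw [Finset.prod_mul_distrib, Finset.prod_mul_distrib, Finset.prod_const,
        Finset.card_univ, Fintype.card_fin]
      ring
    rw [smul_eq_mul, hprod]
    ring

end AFW
namespace AFW
open MvPolynomial

variable {m k K : ℕ}

/-! ### building alternating maps from antisymmetric coefficients -/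

def piProj (g : Fin K → Fin m) : MultilinearMap ℝ (fun _ : Fin K => Vec m) ℝ :=
  (MultilinearMap.mkPiAlgebra ℝ (Fin K) ℝ).compLinearMap (fun j => LinearMap.proj (g j))

theorem piProj_apply (g : Fin K → Fin m) (v : Fin K → Vec m) :
    piProj g v = ∏ j, v j (g j) := by
  simp [piProj, MultilinearMap.compLinearMap_apply, MultilinearMap.mkPiAlgebra_apply,
    LinearMap.proj_apply]

theorem swap_eq_of_eq {K : ℕ} {α : Type*} {v : Fin K → α} {a b : Fin K} (hv : v a = v b)
    (j : Fin K) : v (Equiv.swap a b j) = v j := by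
  rcases eq_or_ne j a with rfl | hja
  · rw [Equiv.swap_apply_left]; exact hv.symm
  rcases eq_or_ne j b with rfl | hjb
  · rw [Equiv.swap_apply_right]; exact hv
  · rw [Equiv.swap_apply_of_ne_of_ne hja hjb]

theorem prod_swap_eq {K m : ℕ} {v : Fin K → Vec m} {a b : Fin K} (hv : v a = v b)
    (g : Fin K → Fin m) : (∏ j, v j (g (Equiv.swap a b j))) = ∏ j, v j (g j) := by
  have h1 := Equiv.prod_comp (Equiv.swap a b) (fun j => v (Equiv.swap a b j) (g j))
  -- h1 : ∏ j, v (swap (swap j)) (g (swap j)) = ∏ j, v (swap j) (g j)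
  simp only [Equiv.swap_apply_self] at h1
  rw [h1]
  exact Finset.prod_congr rfl fun j _ => by rw [swap_eq_of_eq hv j]

def mkAlt (t : (Fin K → Fin m) → ℝ)
    (ht : ∀ (g : Fin K → Fin m) (a b : Fin K), a ≠ b →
      t (fun j => g (Equiv.swap a b j)) = - t g) :
    (Vec m) [⋀^Fin K]→ₗ[ℝ] ℝ where
  toMultilinearMap := ∑ g : Fin K → Fin m, t g • piProj g
  map_eq_zero_of_eq' := by
    intro v a b hvab hab
    show (∑ g : Fin K → Fin m, t g • piProj g) v = 0
    have happ : (∑ g : Fin K → Fin m, t g • piProj g) v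
        = ∑ g : Fin K → Fin m, t g * ∏ j, v j (g j) := by
      rw [MultilinearMap.sum_apply]
      exact Finset.sum_congr rfl fun g _ => by
        rw [MultilinearMap.smul_apply, piProj_apply, smul_eq_mul]
    rw [happ]
    set F : (Fin K → Fin m) → ℝ := fun g => t g * ∏ j, v j (g j) with hF
    have key : ∀ g, F (fun j => g (Equiv.swap a b j)) = - F g := by
      intro g
      rw [hF]
      simp only
      rw [ht g a b hab, prod_swap_eq hvab g]
      ring
    have hsum : ∑ g, F g = - ∑ g, F g := by
      set e : (Fin K → Fin m) ≃ (Fin K → Fin m) :=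
        Equiv.arrowCongr (Equiv.swap a b) (Equiv.refl (Fin m)) with he
      calc ∑ g, F g = ∑ g, F (e g) := (Equiv.sum_comp e F).symm
        _ = ∑ g, - F g := by
            refine Finset.sum_congr rfl fun g _ => ?_
            have : e g = fun j => g (Equiv.swap a b j) := by
              funext j
              simp [he, Equiv.arrowCongr_apply]
            rw [this, key g]
        _ = - ∑ g, F g := by rw [Finset.sum_neg_distrib]
    linarith

theorem mkAlt_apply (t : (Fin K → Fin m) → ℝ) (ht) (v : Fin K → Vec m) :
    mkAlt t ht v = ∑ g : Fin K → Fin m, t g * ∏ j, v j (g j) := by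
  show (∑ g : Fin K → Fin m, t g • piProj g) v = _
  rw [MultilinearMap.sum_apply]
  exact Finset.sum_congr rfl fun g _ => by
    rw [MultilinearMap.smul_apply, piProj_apply, smul_eq_mul]

/-! ### helper: product of dPhi entries -/

theorem prod_dPhi (u : Vec m) (v : Fin K → Vec m) (g : Fin K → Fin m) :
    (∏ j, dPhi m u (v j) (g j)) = (2:ℝ)^K * (∏ j, v j (g j)) * ∏ j, u (g j) := by
  rw [Finset.prod_congr rfl fun j (_ : j ∈ Finset.univ) => dPhi_apply m u (v j) (g j)]
  rw [Finset.prod_mul_distrib, Finset.prod_mul_distrib, Finset.prod_const,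
    Finset.card_univ, Fintype.card_fin]
  ring

theorem reflLin_single (i j' : Fin m) :
    reflLin m i (Pi.single j' (1:ℝ)) = (if j' = i then (-1:ℝ) else 1) • (Pi.single j' 1 : Vec m) := by
  funext l
  rw [reflLin_apply]
  by_cases hl : l = i <;> by_cases hj : j' = i
  · subst hl; subst hj
    simp [reflFun, Pi.single_apply]
  · subst hl
    simp [reflFun, Pi.single_apply, hj, Ne.symm hj]
  · subst hj
    simp [reflFun, Pi.single_apply, hl]
  · simp [reflFun, Pi.single_apply, hl, hj]

theorem sign_prod {g : Fin K → Fin m} (hg : Function.Injective g) (i : Fin m) :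
    (∏ j, (if g j = i then (-1:ℝ) else 1))
      = if i ∈ Finset.univ.image g then (-1:ℝ) else 1 := by
  classical
  by_cases hmem : i ∈ Finset.univ.image g
  · obtain ⟨j₀, _, rfl⟩ := Finset.mem_image.mp hmem
    rw [if_pos hmem, Finset.prod_eq_single j₀]
    · rw [if_pos rfl]
    · intro j _ hj
      exact if_neg fun h => hj (hg h)
    · intro h; exact absurd (Finset.mem_univ j₀) h
  · rw [if_neg hmem]
    exact Finset.prod_eq_one fun j _ =>
      if_neg fun h => hmem (Finset.mem_image.mpr ⟨j, Finset.mem_univ j, h⟩)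

/-! ### The structure theorem for even polynomial forms -/

theorem even_structure {s t : ℤ} {γ : Form m K} (hγ : γ ∈ PL m K s)
    (he : IsEven m K γ) (hst : s ≤ 2 * t + K) :
    ∃ β ∈ PL m K t, phiPull m K β = γ := by
  classical
  set c : (Fin K → Fin m) → MvPolynomial (Fin m) ℝ :=
    fun g => (hγ (fun j => Pi.single (g j) 1)).choose with hc
  have hcdeg : ∀ g, degLE s (c g) := fun g => (hγ _).choose_spec.1
  have hceval : ∀ g x, γ x (fun j => Pi.single (g j) 1) = eval x (c g) :=
    fun g => (hγ _).choose_spec.2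
  -- reflection functional equation
  have hrefl : ∀ (g : Fin K → Fin m), Function.Injective g → ∀ (i : Fin m) (x : Vec m),
      eval (reflFun m i x) (c g)
        = (if i ∈ Finset.univ.image g then (-1:ℝ) else 1) * eval x (c g) := by
    intro g hg i x
    have heq := he i
    have heq2 : γ (reflFun m i x) (fun j => reflLin m i (Pi.single (g j) 1))
        = γ x (fun j => Pi.single (g j) 1) := by
      conv_rhs => rw [← heq]
      rfl
    have h3 : (fun j => reflLin m i (Pi.single (g j) (1:ℝ)))
        = fun j => (if g j = i then (-1:ℝ) else 1) • (Pi.single (g j) 1 : Vec m) := by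
      funext j; exact reflLin_single i (g j)
    rw [h3] at heq2
    have h4 : γ (reflFun m i x) (fun j => (if g j = i then (-1:ℝ) else 1) • (Pi.single (g j) 1 : Vec m))
        = (∏ j, (if g j = i then (-1:ℝ) else 1)) • γ (reflFun m i x) (fun j => Pi.single (g j) 1) :=
      (γ (reflFun m i x)).toMultilinearMap.map_smul_univ _ _
    rw [h4, sign_prod hg i, hceval, hceval] at heq2
    by_cases hmem : i ∈ Finset.univ.image g
    · rw [if_pos hmem] at heq2 ⊢
      rw [smul_eq_mul] at heq2
      linarith
    · rw [if_neg hmem] at heq2 ⊢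
      rw [smul_eq_mul] at heq2
      linarith
  -- coefficient parity
  have hpar : ∀ g, Function.Injective g → ∀ d ∈ (c g).support, ∀ i : Fin m,
      if i ∈ Finset.univ.image g then d i % 2 = 1 else d i % 2 = 0 := by
    intro g hg d hd i
    set ε : ℝ := if i ∈ Finset.univ.image g then (-1:ℝ) else 1 with hε
    have hpoly : refP {i} (c g) = C ε * c g := by
      refine MvPolynomial.funext fun x => ?_
      rw [eval_refP, map_mul, eval_C, reflFunS_singleton, hrefl g hg i x]
    have hcoeff : ((-1:ℝ)) ^ (d i) * coeff d (c g) = ε * coeff d (c g) := by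
      have := congrArg (coeff d) hpoly
      rwa [coeff_refP, Finset.prod_singleton, MvPolynomial.coeff_C_mul] at this
    have hcd : coeff d (c g) ≠ 0 := MvPolynomial.mem_support_iff.mp hd
    have hpow : ((-1:ℝ)) ^ (d i) = ε := mul_right_cancel₀ hcd hcoeff
    by_cases hmem : i ∈ Finset.univ.image g
    · rw [if_pos hmem]
      rw [hε, if_pos hmem] at hpow
      by_contra hodd
      have heven : Even (d i) := Nat.even_iff.mpr (by omega)
      rw [heven.neg_one_pow] at hpow
      norm_num at hpow
    · rw [if_neg hmem]
      rw [hε, if_neg hmem] at hpow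
      by_contra hodd
      have hoddn : Odd (d i) := Nat.odd_iff.mpr (by omega)
      rw [hoddn.neg_one_pow] at hpow
      norm_num at hpow
  -- non-injective coefficients vanish
  have hzero : ∀ g, ¬Function.Injective g → c g = 0 := by
    intro g hg
    refine MvPolynomial.funext fun x => ?_
    rw [← hceval g x, map_zero]
    obtain ⟨a, b, hgab, hab⟩ := Function.not_injective_iff.mp hg
    exact AlternatingMap.map_eq_zero_of_eq _ _ (by rw [hgab]) hab
  -- swap antisymmetry
  have hcswap : ∀ (g : Fin K → Fin m) (a b : Fin K), a ≠ b →
      c (fun j => g (Equiv.swap a b j)) = - c g := by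
    intro g a b hab
    refine MvPolynomial.funext fun x => ?_
    rw [← hceval _ x, map_neg, ← hceval g x]
    exact AlternatingMap.map_swap (γ x) (fun j => Pi.single (g j) 1) hab
  -- halved polynomials
  set q : (Fin K → Fin m) → MvPolynomial (Fin m) ℝ :=
    fun g => if Function.Injective g then halfP (c g) else 0 with hq
  have hqswap : ∀ (g : Fin K → Fin m) (a b : Fin K), a ≠ b →
      q (fun j => g (Equiv.swap a b j)) = - q g := by
    intro g a b hab
    by_cases hg : Function.Injective g
    · have hg' : Function.Injective (fun j => g (Equiv.swap a b j)) :=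
        hg.comp (Equiv.swap a b).injective
      rw [hq]
      simp only [if_pos hg, if_pos hg']
      rw [hcswap g a b hab, halfP_neg]
    · have hg' : ¬ Function.Injective (fun j => g (Equiv.swap a b j)) := by
        intro hinj
        apply hg
        have h5 := hinj.comp (Equiv.swap a b).injective
        have h6 : (fun j => g (Equiv.swap a b (Equiv.swap a b j))) = g := by
          funext j; rw [Equiv.swap_apply_self]
        rwa [show ((fun j => g (Equiv.swap a b j)) ∘ (Equiv.swap a b)) =
          (fun j => g (Equiv.swap a b (Equiv.swap a b j))) from rfl, h6] at h5
      rw [hq]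
      simp only [if_neg hg, if_neg hg']
      rw [neg_zero]
  -- reconstruction identity
  have hrec : ∀ (g : Fin K → Fin m) (u : Vec m),
      (∏ j, u (g j)) * eval (Phi m u) (q g) = eval u (c g) := by
    intro g u
    by_cases hg : Function.Injective g
    · rw [hq]
      simp only [if_pos hg]
      rw [halfP, map_sum, eval_eq' u (c g), Finset.mul_sum]
      refine Finset.sum_congr rfl fun d hd => ?_
      rw [eval_monomial, Finsupp.prod_pow]
      have himg : (∏ j, u (g j)) = ∏ i ∈ Finset.univ.image g, u i := by
        rw [Finset.prod_image]
        intro a _ b _ hab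
        exact hg hab
      have hite : (∏ i ∈ Finset.univ.image g, u i)
          = ∏ i, (if i ∈ Finset.univ.image g then u i else 1) := by
        rw [Finset.prod_ite_mem, Finset.univ_inter]
      have hs : (∏ i, (if i ∈ Finset.univ.image g then u i else 1))
          * (∏ i, Phi m u i ^ (halfExp d i)) = ∏ i, u i ^ d i := by
        rw [← Finset.prod_mul_distrib]
        refine Finset.prod_congr rfl fun i _ => ?_
        have hhalf : halfExp d i = d i / 2 := Finsupp.mapRange_apply
        have hpow2 : Phi m u i ^ (halfExp d i) = u i ^ (2 * (d i / 2)) := by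
          show (u i ^ 2) ^ (halfExp d i) = _
          rw [hhalf, ← pow_mul]
        by_cases hi : i ∈ Finset.univ.image g
        · have hodd := hpar g hg d hd i
          rw [if_pos hi] at hodd ⊢
          rw [hpow2, ← pow_succ']
          congr 1
          omega
        · have heven := hpar g hg d hd i
          rw [if_neg hi] at heven
          rw [if_neg hi, one_mul, hpow2]
          congr 1
          omega
      calc (∏ j, u (g j)) * (coeff d (c g) * ∏ i, Phi m u i ^ (halfExp d i))
          = coeff d (c g) * ((∏ i, (if i ∈ Finset.univ.image g then u i else 1))
              * ∏ i, Phi m u i ^ (halfExp d i)) := by rw [himg, hite]; ring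
        _ = coeff d (c g) * ∏ i, u i ^ d i := by rw [hs]
    · rw [hq]
      simp only [if_neg hg]
      rw [map_zero, mul_zero, hzero g hg, map_zero]
  -- the form β
  have h2K : ((2:ℝ)^K) ≠ 0 := by positivity
  have hts : ∀ (x : Vec m) (g : Fin K → Fin m) (a b : Fin K), a ≠ b →
      ((2:ℝ)^K)⁻¹ * eval x (q (fun j => g (Equiv.swap a b j)))
        = -(((2:ℝ)^K)⁻¹ * eval x (q g)) := by
    intro x g a b hab
    rw [hqswap g a b hab, map_neg]
    ring
  refine ⟨fun x => mkAlt (fun g => ((2:ℝ)^K)⁻¹ * eval x (q g))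
    (fun g a b hab => hts x g a b hab), ?_, ?_⟩
  · -- membership in PL
    intro v
    refine ⟨∑ g : Fin K → Fin m, (((2:ℝ)^K)⁻¹ * ∏ j, v j (g j)) • q g, ?_, ?_⟩
    · refine degLE_sum _ _ fun g _ => degLE_smul _ ?_
      by_cases hg : Function.Injective g
      · rw [hq]
        simp only [if_pos hg]
        intro d' hd'
        obtain ⟨d, hd, hmem⟩ := Finset.mem_biUnion.mp (MvPolynomial.support_sum hd')
        have hd'eq : d' = halfExp d := by
          have := MvPolynomial.support_monomial_subset hmem
          rwa [Finset.mem_singleton] at this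
        subst hd'eq
        rw [degSum_eq]
        have hKsum : (∑ i, (if i ∈ Finset.univ.image g then 1 else 0)) = K := by
          rw [Finset.sum_ite_mem, Finset.univ_inter, Finset.sum_const, smul_eq_mul, mul_one,
            Finset.card_image_of_injective _ hg, Finset.card_univ, Fintype.card_fin]
        have hsplit : 2 * (∑ i, halfExp d i) + K = ∑ i, d i := by
          rw [← hKsum, Finset.mul_sum, ← Finset.sum_add_distrib]
          refine Finset.sum_congr rfl fun i _ => ?_
          have := hpar g hg d hd i
          by_cases hi : i ∈ Finset.univ.image g
          · rw [if_pos hi] at this ⊢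
            rw [show halfExp d i = d i / 2 from rfl]
            omega
          · rw [if_neg hi] at this ⊢
            rw [show halfExp d i = d i / 2 from rfl]
            omega
        have hds := hcdeg g d hd
        rw [degSum_eq] at hds
        have : ((∑ i, d i : ℕ) : ℤ) ≤ 2 * t + K := le_trans hds hst
        omega
      · rw [hq]
        simp only [if_neg hg]
        exact degLE_zero trivial
    · intro x
      rw [mkAlt_apply, map_sum]
      refine Finset.sum_congr rfl fun g _ => ?_
      rw [MvPolynomial.smul_eq_C_mul, map_mul, eval_C]
      ring
  · -- phiPull β = γ
    funext u
    refine AlternatingMap.ext fun v => ?_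
    have h5 : phiPull m K (fun x => mkAlt (fun g => ((2:ℝ)^K)⁻¹ * eval x (q g))
        (fun g a b hab => hts x g a b hab)) u v
        = mkAlt (fun g => ((2:ℝ)^K)⁻¹ * eval (Phi m u) (q g))
          (fun g a b hab => hts (Phi m u) g a b hab)
          (fun j => dPhi m u (v j)) := rfl
    rw [h5, mkAlt_apply, alt_expand (γ u) v]
    refine Finset.sum_congr rfl fun g _ => ?_
    rw [hceval g u, ← hrec g u, prod_dPhi, smul_eq_mul]
    field_simp
end AFW
namespace AFW
open MvPolynomial

variable {m k K : ℕ}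

/-! ### pointwise form identities -/

theorem iU_apply (β : Form m (k+1)) (x : Vec m) (v : Fin k → Vec m) :
    iU β x v = β x (Fin.cons x v) := rfl

theorem comp_cons (f : Vec m → Vec m) (a : Vec m) (w : Fin k → Vec m) :
    (fun j => f ((Fin.cons a w : Fin (k+1) → Vec m) j))
      = (Fin.cons (f a) (fun j => f (w j)) : Fin (k+1) → Vec m) := by
  funext j
  refine Fin.cases ?_ ?_ j
  · rfl
  · intro j'
    simp only [Fin.cons_succ]

theorem alt_cons_smul (f : (Vec m) [⋀^Fin (k+1)]→ₗ[ℝ] ℝ) (c : ℝ) (a : Vec m)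
    (w : Fin k → Vec m) : f (Fin.cons (c • a) w) = c * f (Fin.cons a w) := by
  rw [show (Fin.cons (c • a) w : Fin (k+1) → Vec m)
        = Function.update (Fin.cons a w) 0 (c • a) from (Fin.update_cons_zero (α := fun _ : Fin (k+1) => Vec m) a w (c • a)).symm,
    AlternatingMap.map_update_smul, Fin.update_cons_zero (α := fun _ : Fin (k+1) => Vec m) a w a, smul_eq_mul]

theorem dPhi_self (u : Vec m) : dPhi m u u = (2:ℝ) • Phi m u := by
  funext l
  rw [dPhi_apply]
  show 2 * u l * u l = 2 * (u l ^ 2)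
  ring

/-! ### reflections on the sphere -/

def reflPullSphS (m k : ℕ) (S : Finset (Fin m)) (α : FormOn m (sphereSet m) k) :
    FormOn m (sphereSet m) k :=
  fun u => (α ⟨reflFunS m S u.1, reflFunS_mem_sphere u.2⟩).compLinearMap (reflLinS m S)

theorem reflPullSphS_apply (S : Finset (Fin m)) (α : FormOn m (sphereSet m) k)
    (u : sphereSet m) (v : Fin k → Vec m) :
    reflPullSphS m k S α u v
      = α ⟨reflFunS m S u.1, reflFunS_mem_sphere u.2⟩ (fun j => reflFunS m S (v j)) := by
  rw [reflPullSphS, AlternatingMap.compLinearMap_apply]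
  congr 1
  funext j
  exact reflLinS_eq S (v j)

theorem resSph_iU_apply (β : Form m (k+1)) (u : sphereSet m) (v : Fin k → Vec m) :
    resSph m k (iU β) u v = β u.1 (Fin.cons u.1 (fun j => projSph m u.1 (v j))) := rfl

theorem resSph_iU_reflPullS (S : Finset (Fin m)) (β : Form m (k+1)) :
    resSph m k (iU (reflPullS m (k+1) S β)) = reflPullSphS m k S (resSph m k (iU β)) := by
  funext u
  refine AlternatingMap.ext fun v => ?_
  rw [resSph_iU_apply, reflPullSphS_apply, resSph_iU_apply, reflPullS_apply]
  rw [comp_cons (reflFunS m S) u.1 (fun j => projSph m u.1 (v j))]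
  congr 1
  funext j
  refine Fin.cases ?_ ?_ j
  · rfl
  · intro j'
    simp only [Fin.cons_succ]
    rw [← reflFunS_projSph]

theorem reflPullSphS_even {α : FormOn m (sphereSet m) k} (he : IsEvenSph m k α)
    (S : Finset (Fin m)) : reflPullSphS m k S α = α := by
  classical
  induction S using Finset.induction_on with
  | empty =>
    funext u
    refine AlternatingMap.ext fun v => ?_
    rw [reflPullSphS_apply]
    rw [show (fun j => reflFunS m (∅ : Finset (Fin m)) (v j)) = v from
      funext fun j => reflFunS_empty (v j)]
    have hsub : (⟨reflFunS m (∅ : Finset (Fin m)) u.1, reflFunS_mem_sphere u.2⟩ : sphereSet m)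
        = u := Subtype.ext (reflFunS_empty u.1)
    rw [hsub]
  | @insert i S hi ih =>
    have hcomp : reflPullSphS m k (insert i S) α
        = reflPullSphS m k S (reflPullSph m k i α) := by
      funext u
      refine AlternatingMap.ext fun v => ?_
      rw [reflPullSphS_apply]
      have hR : reflPullSphS m k S (reflPullSph m k i α) u v
          = α ⟨reflFun m i (reflFunS m S u.1), refl_mem_sphere (reflFunS_mem_sphere u.2)⟩
              (fun j => reflFun m i (reflFunS m S (v j))) := by
        rw [reflPullSphS_apply]
        show (α ⟨reflFun m i (reflFunS m S u.1), _⟩).compLinearMap (reflLin m i)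
            (fun j => reflFunS m S (v j)) = _
        rw [AlternatingMap.compLinearMap_apply]
        congr 1
        funext j l
        exact reflLin_apply m i _ l
      rw [hR]
      have hsub : (⟨reflFun m i (reflFunS m S u.1), refl_mem_sphere (reflFunS_mem_sphere u.2)⟩ :
          sphereSet m) = ⟨reflFunS m (insert i S) u.1, reflFunS_mem_sphere u.2⟩ :=
        Subtype.ext (reflFun_reflFunS_insert hi u.1)
      rw [hsub]
      congr 1
      funext j
      exact (reflFun_reflFunS_insert hi (v j)).symm
    rw [hcomp, he i, ih]

/-! ### linearity of the relevant operators -/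

theorem resSph_iU_smul (c : ℝ) (β : Form m (k+1)) :
    resSph m k (iU (c • β)) = c • resSph m k (iU β) := by
  funext u
  refine AlternatingMap.ext fun v => ?_
  rw [resSph_iU_apply]
  show (c • β u.1) (Fin.cons u.1 _) = (c • resSph m k (iU β)) u v
  rw [AlternatingMap.smul_apply]
  rfl

theorem resSph_iU_sum {ι : Type*} (s : Finset ι) (f : ι → Form m (k+1)) :
    resSph m k (iU (∑ i ∈ s, f i)) = ∑ i ∈ s, resSph m k (iU (f i)) := by
  funext u
  refine AlternatingMap.ext fun v => ?_
  rw [resSph_iU_apply]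
  have h1 : (∑ i ∈ s, f i) u.1 = ∑ i ∈ s, f i u.1 := Finset.sum_apply u.1 s f
  rw [h1, sum_alt_apply s (fun i => f i u.1)]
  have h2 : (∑ i ∈ s, resSph m k (iU (f i))) u = ∑ i ∈ s, resSph m k (iU (f i)) u :=
    Finset.sum_apply u s _
  rw [h2, sum_alt_apply s (fun i => resSph m k (iU (f i)) u)]
  rfl

theorem reflPull_smul (i : Fin m) (c : ℝ) (α : Form m k) :
    reflPull m k i (c • α) = c • reflPull m k i α := by
  funext x
  refine AlternatingMap.ext fun v => ?_
  show ((c • α) (reflFun m i x)).compLinearMap (reflLin m i) v = (c • reflPull m k i α) x v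
  rw [show (c • α) (reflFun m i x) = c • (α (reflFun m i x)) from rfl]
  rw [AlternatingMap.compLinearMap_apply, AlternatingMap.smul_apply]
  rfl

theorem reflPull_sum {ι : Type*} (i : Fin m) (s : Finset ι) (f : ι → Form m k) :
    reflPull m k i (∑ j ∈ s, f j) = ∑ j ∈ s, reflPull m k i (f j) := by
  funext x
  refine AlternatingMap.ext fun v => ?_
  show ((∑ j ∈ s, f j) (reflFun m i x)).compLinearMap (reflLin m i) v = _
  rw [AlternatingMap.compLinearMap_apply, Finset.sum_apply (reflFun m i x) s f,
    sum_alt_apply]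
  have h2 : (∑ j ∈ s, reflPull m k i (f j)) x v = ∑ j ∈ s, reflPull m k i (f j) x v := by
    rw [Finset.sum_apply x s _, sum_alt_apply]
  rw [h2]
  rfl

theorem reflPull_reflPullS (i : Fin m) (S : Finset (Fin m)) (δ : Form m k) :
    reflPull m k i (reflPullS m k S δ) = reflPullS m k (symmDiff S {i}) δ := by
  classical
  funext x
  refine AlternatingMap.ext fun v => ?_
  have hL : reflPull m k i (reflPullS m k S δ) x v
      = reflPullS m k S δ (reflFun m i x) (fun j => reflFun m i (v j)) := by
    show (reflPullS m k S δ (reflFun m i x)).compLinearMap (reflLin m i) v = _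
    rw [AlternatingMap.compLinearMap_apply]
    congr 1
    funext j l
    exact reflLin_apply m i (v j) l
  rw [hL, reflPullS_apply, reflPullS_apply]
  rw [reflFunS_reflFun]
  congr 1
  funext j
  rw [reflFunS_reflFun]

theorem sum_symmDiff_reindex (i : Fin m) (f : Finset (Fin m) → Form m k) :
    ∑ S : Finset (Fin m), f (symmDiff S {i}) = ∑ S : Finset (Fin m), f S := by
  classical
  exact Equiv.sum_comp
    (⟨fun S => symmDiff S {i}, fun S => symmDiff S {i},
      fun S => symmDiff_symmDiff_cancel_right {i} S,
      fun S => symmDiff_symmDiff_cancel_right {i} S⟩ : Finset (Fin m) ≃ Finset (Fin m)) f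

end AFW
namespace AFW
open MvPolynomial

variable {m k K : ℕ}

/-! ### the key evaluation of `Φ^*` on restricted Koszul forms -/

theorem phiPullTS_resSim_iU (β : Form m (k+1)) (u : sphereSet m) (v : Fin k → Vec m) :
    phiPullTS m k (resSim m k (iU β)) u v
      = β (Phi m u.1) (Fin.cons (Phi m u.1) (fun j => dPhi m u.1 (projSph m u.1 (v j)))) := by
  have h0 : phiPullTS m k (resSim m k (iU β)) u v
      = (iU β) (Phi m u.1) (fun j => projSim m (dPhi m u.1 (projSph m u.1 (v j)))) := rfl
  rw [h0]
  rw [show (fun j => projSim m (dPhi m u.1 (projSph m u.1 (v j))))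
      = (fun j => dPhi m u.1 (projSph m u.1 (v j))) from
    funext fun j => projSim_eq_self (sum_dPhi_projSph u.2 _)]
  rfl

theorem phiPullTS_even (a : FormOn m (simplexSet m) k) : IsEvenSph m k (phiPullTS m k a) := by
  intro i
  funext u
  refine AlternatingMap.ext fun v => ?_
  have hL : reflPullSph m k i (phiPullTS m k a) u v
      = a ⟨Phi m (reflFun m i u.1), phi_mem_simplex (refl_mem_sphere u.2)⟩
          (fun j => dPhi m (reflFun m i u.1)
            (projSph m (reflFun m i u.1) (reflLin m i (v j)))) := rfl
  rw [hL]
  have hsub : (⟨Phi m (reflFun m i u.1), phi_mem_simplex (refl_mem_sphere u.2)⟩ : simplexSet m)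
      = ⟨Phi m u.1, phi_mem_simplex u.2⟩ := Subtype.ext (Phi_reflFun i u.1)
  rw [hsub]
  have hvec : ∀ j, dPhi m (reflFun m i u.1)
      (projSph m (reflFun m i u.1) (reflLin m i (v j))) = dPhi m u.1 (projSph m u.1 (v j)) := by
    intro j
    have h1 : reflLin m i (v j) = reflFun m i (v j) := funext fun l => reflLin_apply m i (v j) l
    rw [h1, reflFun_projSph, dPhi_reflFun]
  rw [show (fun j => dPhi m (reflFun m i u.1)
      (projSph m (reflFun m i u.1) (reflLin m i (v j))))
      = (fun j => dPhi m u.1 (projSph m u.1 (v j))) from funext hvec]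
  rfl

theorem phiPullTS_eq_resSph (β : Form m (k+1)) :
    phiPullTS m k (resSim m k (iU β))
      = resSph m k (iU ((2:ℝ)⁻¹ • phiPull m (k+1) β)) := by
  funext u
  refine AlternatingMap.ext fun v => ?_
  rw [phiPullTS_resSim_iU, resSph_iU_apply]
  have h1 : ((2:ℝ)⁻¹ • phiPull m (k+1) β) u.1
      (Fin.cons u.1 (fun j => projSph m u.1 (v j)))
      = (2:ℝ)⁻¹ * (phiPull m (k+1) β) u.1 (Fin.cons u.1 (fun j => projSph m u.1 (v j))) := rfl
  rw [h1]
  have h2 : (phiPull m (k+1) β) u.1 (Fin.cons u.1 (fun j => projSph m u.1 (v j)))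
      = β (Phi m u.1) (fun j' => dPhi m u.1
          ((Fin.cons u.1 (fun j => projSph m u.1 (v j)) : Fin (k+1) → Vec m) j')) := rfl
  rw [h2, comp_cons (dPhi m u.1) u.1 (fun j => projSph m u.1 (v j)), dPhi_self,
    alt_cons_smul]
  ring

/-! ### the one-variable specialization trick -/

theorem eval_line (p : MvPolynomial (Fin m) ℝ) (x c : Vec m)
    (h : ∀ t ∈ Set.Ioc (0:ℝ) 1, eval (fun i => x i + c i * t) p = 0) : eval x p = 0 := by
  set g : Polynomial ℝ := MvPolynomial.eval₂ Polynomial.C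
    (fun i => Polynomial.C (x i) + Polynomial.C (c i) * Polynomial.X) p with hg
  have hcomp : ∀ t : ℝ, Polynomial.eval t g = eval (fun i => x i + c i * t) p := by
    intro t
    rw [hg]
    have := MvPolynomial.eval₂_comp_left (Polynomial.evalRingHom t) (Polynomial.C : ℝ →+* _)
      (fun i => Polynomial.C (x i) + Polynomial.C (c i) * Polynomial.X) p
    have hid : (Polynomial.evalRingHom t).comp (Polynomial.C : ℝ →+* Polynomial ℝ)
        = RingHom.id ℝ := RingHom.ext fun a => by simp
    rw [hid] at this
    have harg : ((Polynomial.evalRingHom t) ∘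
        fun i => Polynomial.C (x i) + Polynomial.C (c i) * Polynomial.X)
        = fun i => x i + c i * t := by
      funext i; simp
    rw [harg] at this
    exact this
  have hroots : {t : ℝ | g.IsRoot t}.Infinite := by
    refine Set.Infinite.mono ?_ (Set.Ioc_infinite (by norm_num : (0:ℝ) < 1))
    intro t ht
    show g.IsRoot t
    rw [Polynomial.IsRoot, hcomp t]
    exact h t ht
  have hg0 : g = 0 := Polynomial.eq_zero_of_infinite_isRoot g hroots
  have := hcomp 0
  rw [hg0] at this
  simp only [Polynomial.eval_zero] at this
  rw [show (fun i => x i + c i * 0) = x from funext fun i => by ring] at this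
  exact this.symm

/-! ### polynomial representation of `i_X β` evaluations -/

theorem iU_eval {s : ℤ} (β : Form m (k+1)) (hβ : β ∈ PL m (k+1) s) (w : Fin k → Vec m) :
    ∃ P : MvPolynomial (Fin m) ℝ, ∀ y : Vec m, iU β y w = eval y P := by
  classical
  refine ⟨∑ h : Fin (k+1) → Fin m,
    C (∏ j : Fin k, w j (h j.succ)) *
      (X (h 0) * (hβ (fun j => Pi.single (h j) 1)).choose), fun y => ?_⟩
  rw [iU_apply, alt_expand (β y) (Fin.cons y w), map_sum]
  refine Finset.sum_congr rfl fun h _ => ?_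
  simp only [map_mul, eval_C, eval_X]
  rw [← (hβ (fun j => Pi.single (h j) 1)).choose_spec.2 y]
  have hprod : (∏ j : Fin (k+1), (Fin.cons y w : Fin (k+1) → Vec m) j (h j))
      = y (h 0) * ∏ j : Fin k, w j (h j.succ) := by
    rw [Fin.prod_univ_succ]
    rfl
  rw [smul_eq_mul, hprod]
  ring

end AFW
open AFW

theorem stmt9 (n k r : ℕ) (hn : 1 ≤ n) (hk : k ≤ n) (hr : 1 ≤ r) :
    Set.BijOn (phiPullTS (n + 1) k) (PLmsim (n + 1) k (r : ℤ))
      {α ∈ PLmsph (n + 1) k (2 * (r : ℤ) + k) | IsEvenSph (n + 1) k α} ∧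
    (∀ a b, phiPullTS (n + 1) k (a + b) = phiPullTS (n + 1) k a + phiPullTS (n + 1) k b) ∧
    (∀ (c : ℝ) a, phiPullTS (n + 1) k (c • a) = c • phiPullTS (n + 1) k a) := by
  classical
  refine ⟨⟨?_, ?_, ?_⟩, ?_, ?_⟩
  · -- MapsTo
    intro a ha
    obtain ⟨ω, ⟨β, hβ, rfl⟩, rfl⟩ := ha
    refine ⟨?_, phiPullTS_even _⟩
    rw [phiPullTS_eq_resSph β]
    refine ⟨iU ((2:ℝ)⁻¹ • phiPull (n+1) (k+1) β), ⟨(2:ℝ)⁻¹ • phiPull (n+1) (k+1) β, ?_, rfl⟩,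
      rfl⟩
    refine PL_smul _ ?_
    have h1 := PL_phiPull hβ
    have heq : 2*((r:ℤ)-1) + ((k+1:ℕ):ℤ) = (2*(r:ℤ)+(k:ℤ)) - 1 := by push_cast; ring
    rwa [heq] at h1
  · -- InjOn
    intro a ha b hb hab
    obtain ⟨ωa, ⟨βa, hβa, rfl⟩, rfl⟩ := ha
    obtain ⟨ωb, ⟨βb, hβb, rfl⟩, rfl⟩ := hb
    funext x
    refine AlternatingMap.ext fun v => ?_
    have hwsum : ∀ j, ∑ l, projSim (n+1) (v j) l = 0 :=
      fun j => sum_projSim_zero (Nat.succ_ne_zero n) (v j)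
    obtain ⟨Pa, hPa⟩ := iU_eval βa hβa (fun j => projSim (n+1) (v j))
    obtain ⟨Pb, hPb⟩ := iU_eval βb hβb (fun j => projSim (n+1) (v j))
    have hgoala : resSim (n+1) k (iU βa) x v
        = iU βa x.1 (fun j => projSim (n+1) (v j)) := rfl
    have hgoalb : resSim (n+1) k (iU βb) x v
        = iU βb x.1 (fun j => projSim (n+1) (v j)) := rfl
    rw [hgoala, hgoalb, hPa, hPb]
    have hkey : MvPolynomial.eval x.1 (Pa - Pb) = 0 := by
      refine eval_line (Pa - Pb) x.1 (fun i => ((n+1:ℕ):ℝ)⁻¹ - x.1 i) fun s hs => ?_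
      set y : Vec (n+1) := fun i => x.1 i + (((n+1:ℕ):ℝ)⁻¹ - x.1 i) * s with hydef
      have hy1 : ∀ i, 0 < y i := by
        intro i
        have h1 : y i = (1 - s) * x.1 i + s * ((n+1:ℕ):ℝ)⁻¹ := by rw [hydef]; ring
        rw [h1]
        have hx0 := x.2.1 i
        have hpos : (0:ℝ) < ((n+1:ℕ):ℝ)⁻¹ := by positivity
        nlinarith [hs.1, hs.2]
      have hy2 : ∑ i, y i = 1 := by
        have h2 : ∀ i, y i = (1 - s) * x.1 i + s * ((n+1:ℕ):ℝ)⁻¹ := fun i => by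
          rw [hydef]; ring
        rw [Finset.sum_congr rfl fun i _ => h2 i, Finset.sum_add_distrib, ← Finset.mul_sum,
          x.2.2, Finset.sum_const, Finset.card_univ, Fintype.card_fin]
        have hne : ((n+1:ℕ):ℝ) ≠ 0 := Nat.cast_ne_zero.mpr (Nat.succ_ne_zero n)
        rw [nsmul_eq_mul]
        field_simp
        ring
      set u : Vec (n+1) := fun l => Real.sqrt (y l) with hu
      have hul : ∀ l, u l ≠ 0 := fun l => ne_of_gt (Real.sqrt_pos.mpr (hy1 l))
      have husph : u ∈ sphereSet (n+1) := by
        show ∑ l, u l ^ 2 = 1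
        rw [Finset.sum_congr rfl fun l _ =>
          Real.sq_sqrt (le_of_lt (hy1 l))]
        exact hy2
      have hΦ : Phi (n+1) u = y := funext fun l => Real.sq_sqrt (le_of_lt (hy1 l))
      have hdz : ∀ j, dPhi (n+1) u (projSph (n+1) u
          (fun l => projSim (n+1) (v j) l / (2 * u l))) = projSim (n+1) (v j) := by
        intro j
        have hdot : ∑ l, u l * (projSim (n+1) (v j) l / (2 * u l)) = 0 := by
          have h3 : ∀ l, u l * (projSim (n+1) (v j) l / (2 * u l))
              = projSim (n+1) (v j) l / 2 := by
            intro l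
            rw [mul_comm 2 (u l), mul_div_assoc', mul_div_mul_left _ _ (hul l)]
          rw [Finset.sum_congr rfl fun l _ => h3 l, ← Finset.sum_div, hwsum j, zero_div]
        have hproj : projSph (n+1) u (fun l => projSim (n+1) (v j) l / (2 * u l))
            = fun l => projSim (n+1) (v j) l / (2 * u l) := by
          funext l
          rw [projSph_apply, hdot]
          ring
        rw [hproj]
        funext l
        rw [dPhi_apply]
        exact mul_div_cancel₀ _ (mul_ne_zero two_ne_zero (hul l))
      have h5 := congrFun hab ⟨u, husph⟩
      have h6 : phiPullTS (n+1) k (resSim (n+1) k (iU βa)) ⟨u, husph⟩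
            (fun j l => projSim (n+1) (v j) l / (2 * u l))
          = phiPullTS (n+1) k (resSim (n+1) k (iU βb)) ⟨u, husph⟩
            (fun j l => projSim (n+1) (v j) l / (2 * u l)) := by rw [h5]
      rw [phiPullTS_resSim_iU, phiPullTS_resSim_iU] at h6
      rw [show (fun j => dPhi (n+1) u (projSph (n+1) u
          (fun l => projSim (n+1) (v j) l / (2 * u l))))
          = (fun j => projSim (n+1) (v j)) from funext hdz, hΦ] at h6
      have h7 : MvPolynomial.eval y Pa = MvPolynomial.eval y Pb := by
        rw [← hPa y, ← hPb y]
        exact h6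
      show MvPolynomial.eval y (Pa - Pb) = 0
      rw [map_sub, h7, sub_self]
    rw [map_sub] at hkey
    linarith
  · -- SurjOn
    intro α hα
    obtain ⟨hmem, heven⟩ := hα
    obtain ⟨ω, ⟨δ, hδ, rfl⟩, rfl⟩ := hmem
    set δe : Form (n+1) (k+1) :=
      ((2:ℝ)^(n+1))⁻¹ • ∑ S : Finset (Fin (n+1)), reflPullS (n+1) (k+1) S δ with hδe
    have hδePL : δe ∈ PL (n+1) (k+1) (2*(r:ℤ)+(k:ℤ)-1) := by
      rw [hδe]
      exact PL_smul _ (PL_sum _ _ fun S _ => PL_reflPullS S hδ)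
    have hδeEven : IsEven (n+1) (k+1) δe := by
      intro i
      rw [hδe, reflPull_smul, reflPull_sum]
      congr 1
      calc ∑ S : Finset (Fin (n+1)), reflPull (n+1) (k+1) i (reflPullS (n+1) (k+1) S δ)
          = ∑ S : Finset (Fin (n+1)), reflPullS (n+1) (k+1) (symmDiff S {i}) δ :=
            Finset.sum_congr rfl fun S _ => reflPull_reflPullS i S δ
        _ = ∑ S : Finset (Fin (n+1)), reflPullS (n+1) (k+1) S δ :=
            sum_symmDiff_reindex i (fun S => reflPullS (n+1) (k+1) S δ)
    have hres : resSph (n+1) k (iU δe) = resSph (n+1) k (iU δ) := by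
      rw [hδe, resSph_iU_smul, resSph_iU_sum]
      have h8 : ∀ S ∈ (Finset.univ : Finset (Finset (Fin (n+1)))),
          resSph (n+1) k (iU (reflPullS (n+1) (k+1) S δ)) = resSph (n+1) k (iU δ) :=
        fun S _ => by rw [resSph_iU_reflPullS, reflPullSphS_even heven S]
      rw [Finset.sum_congr rfl h8, Finset.sum_const, Finset.card_univ, Fintype.card_finset,
        Fintype.card_fin]
      rw [← Nat.cast_smul_eq_nsmul ℝ, smul_smul]
      have h2K : ((2:ℝ)^(n+1)) ≠ 0 := by positivity
      rw [show (((2^(n+1) : ℕ)):ℝ) = (2:ℝ)^(n+1) by push_cast; ring]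
      rw [inv_mul_cancel₀ h2K, one_smul]
    obtain ⟨β, hβPL, hβeq⟩ := even_structure hδePL hδeEven
      (show 2*(r:ℤ)+(k:ℤ)-1 ≤ 2*((r:ℤ)-1) + ((k+1:ℕ):ℤ) by push_cast; ring_nf; omega)
    refine ⟨resSim (n+1) k (iU ((2:ℝ) • β)),
      ⟨iU ((2:ℝ) • β), ⟨(2:ℝ) • β, PL_smul _ hβPL, rfl⟩, rfl⟩, ?_⟩
    funext u
    refine AlternatingMap.ext fun v => ?_
    rw [phiPullTS_resSim_iU]
    have h9 : ((2:ℝ) • β) (Phi (n+1) u.1)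
        (Fin.cons (Phi (n+1) u.1) (fun j => dPhi (n+1) u.1 (projSph (n+1) u.1 (v j))))
        = (2:ℝ) * β (Phi (n+1) u.1)
          (Fin.cons (Phi (n+1) u.1) (fun j => dPhi (n+1) u.1 (projSph (n+1) u.1 (v j)))) := rfl
    rw [h9, ← alt_cons_smul, ← dPhi_self,
      ← comp_cons (dPhi (n+1) u.1) u.1 (fun j => projSph (n+1) u.1 (v j))]
    have h10 : β (Phi (n+1) u.1) (fun j' => dPhi (n+1) u.1
        ((Fin.cons u.1 (fun j => projSph (n+1) u.1 (v j)) : Fin (k+1) → Vec (n+1)) j'))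
        = phiPull (n+1) (k+1) β u.1
          (Fin.cons u.1 (fun j => projSph (n+1) u.1 (v j))) := rfl
    rw [h10, hβeq]
    have h11 : δe u.1 (Fin.cons u.1 (fun j => projSph (n+1) u.1 (v j)))
        = resSph (n+1) k (iU δe) u v := rfl
    rw [h11, hres]
  · -- additivity
    intro a b
    funext u
    refine AlternatingMap.ext fun v => ?_
    rfl
  · -- scaling
    intro c a
    funext u
    refine AlternatingMap.ext fun v => ?_
    rfl

end
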